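/- Let q = e^{πi/m} with m an even positive integer, and let n be an odd positive integer with m ≥ n. Then the odd orthogonal character so^{odd}_{((m-n)/2, ..., (m-n)/2)} (rectangular shape with n equal parts (m-n)/2) evaluated at (-q^{n-1}, -q^{n-3}, ..., -q^{-n+3}, -q^{-n+1}) equals 0. -/

import Mathlib

open Finset Real

section AuxSo2b
open Polynomial


noncomputable def auxP : ℕ → Polynomial ℂ
  | 0 => 1
  | 1 => Polynomial.X + Polynomial.C 1
  | (u+2) => Polynomial.X * auxP (u+1) - auxP u

lemma auxP_monic_deg : ∀ u : ℕ, (auxP u).Monic ∧ (auxP u).natDegree = u := by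
  intro u
  induction u using Nat.strong_induction_on with
  | _ u ih =>
    match u with
    | 0 => exact ⟨monic_one, natDegree_one⟩
    | 1 => exact ⟨monic_X_add_C 1, natDegree_X_add_C 1⟩
    | (u+2) =>
      obtain ⟨h1m, h1d⟩ := ih (u+1) (by omega)
      obtain ⟨h0m, h0d⟩ := ih u (by omega)
      have hm : (Polynomial.X * auxP (u+1)).Monic := monic_X.mul h1m
      have hd : (Polynomial.X * auxP (u+1)).natDegree = u + 2 := by
        rw [monic_X.natDegree_mul h1m, natDegree_X, h1d]; omega

      have hlt : (auxP u).degree < (Polynomial.X * auxP (u+1)).degree := by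
        rw [degree_eq_natDegree hm.ne_zero, hd]
        refine lt_of_le_of_lt degree_le_natDegree ?_
        rw [h0d]
        exact_mod_cast (by omega : u < u + 2)
      constructor
      · show (Polynomial.X * auxP (u+1) - auxP u).Monic
        exact hm.sub_of_left hlt
      · show (Polynomial.X * auxP (u+1) - auxP u).natDegree = u + 2
        rw [natDegree_sub_eq_left_of_natDegree_lt, hd]
        rw [hd, h0d]; omega

lemma auxP_eval (y : ℂ) (hy : y ≠ 0) : ∀ u : ℕ,
    (auxP u).eval (y^2 + (y^2)⁻¹) * (y - y⁻¹) = y^(2*u+1) - (y^(2*u+1))⁻¹ := by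
  intro u
  induction u using Nat.strong_induction_on with
  | _ u ih =>
    match u with
    | 0 => simp [auxP]
    | 1 =>
      simp only [auxP, eval_add, eval_X, eval_C]
      field_simp
      ring
    | (u+2) =>
      have h1 := ih (u+1) (by omega)
      have h0 := ih u (by omega)
      simp only [auxP, eval_sub, eval_mul, eval_X]
      have : ((y^2 + (y^2)⁻¹) * (auxP (u+1)).eval (y^2 + (y^2)⁻¹)
          - (auxP u).eval (y^2 + (y^2)⁻¹)) * (y - y⁻¹)
          = (y^2 + (y^2)⁻¹) * ((auxP (u+1)).eval (y^2 + (y^2)⁻¹) * (y - y⁻¹))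
            - (auxP u).eval (y^2 + (y^2)⁻¹) * (y - y⁻¹) := by ring
      rw [this, h1, h0]
      field_simp
      ring

lemma den_ne_zero (N : ℕ) (y : Fin N → ℂ) (hy0 : ∀ h, y h ≠ 0)
    (hy1 : ∀ h, y h - (y h)⁻¹ ≠ 0)
    (hw : Function.Injective fun h => (y h)^2 + ((y h)^2)⁻¹) :
    Matrix.det (Matrix.of fun h t : Fin N =>
      y h ^ ((2 * (N : ℤ) - 1 - 2 * (t : ℕ) : ℤ)) -
        y h ^ ((-(2 * (N : ℤ) - 1 - 2 * (t : ℕ)) : ℤ))) ≠ 0 := by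
  set w : Fin N → ℂ := fun h => (y h)^2 + ((y h)^2)⁻¹ with hwdef
  have hentry : (Matrix.of fun h t : Fin N =>
      y h ^ ((2 * (N : ℤ) - 1 - 2 * (t : ℕ) : ℤ)) -
        y h ^ ((-(2 * (N : ℤ) - 1 - 2 * (t : ℕ)) : ℤ)))
      = Matrix.of fun h t : Fin N =>
        (y h - (y h)⁻¹) * (auxP (N - 1 - (t : ℕ))).eval (w h) := by
    ext h t
    have ht : (t : ℕ) < N := t.isLt
    have he : (2 * (N : ℤ) - 1 - 2 * (t : ℕ) : ℤ) = ((2 * (N - 1 - (t : ℕ)) + 1 : ℕ) : ℤ) := by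
      push_cast [Nat.sub_sub]
      omega
    simp only [Matrix.of_apply, he, zpow_neg, zpow_natCast]
    rw [← auxP_eval (y h) (hy0 h) (N - 1 - (t : ℕ))]
    ring
  have hdmc := Matrix.det_mul_column (fun h => y h - (y h)⁻¹)
    (Matrix.of fun h t : Fin N => (auxP (N - 1 - (t : ℕ))).eval (w h))
  simp only [Matrix.of_apply] at hdmc
  rw [hentry, hdmc]
  apply mul_ne_zero
  · exact Finset.prod_ne_zero_iff.mpr fun h _ => hy1 h
  · have hB : (Matrix.of fun h t : Fin N => (auxP (N - 1 - (t : ℕ))).eval (w h))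
        = (Matrix.of fun h t : Fin N => (auxP (t : ℕ)).eval (w h)).submatrix id Fin.revPerm := by
      ext h t
      simp [Matrix.submatrix_apply, Fin.revPerm, Fin.val_rev]
      congr 2
      omega
    show Matrix.det (Matrix.of fun h t : Fin N => (auxP (N - 1 - (t : ℕ))).eval (w h)) ≠ 0
    rw [hB, Matrix.det_permute']
    apply mul_ne_zero
    · rcases Int.units_eq_one_or (Equiv.Perm.sign (Fin.revPerm (n := N))) with h | h <;> simp [h]
    · rw [← Matrix.det_eval_matrixOfPolynomials_eq_det_vandermonde w
        (fun t : Fin N => auxP (t : ℕ))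
        (fun t => (auxP_monic_deg t).2) (fun t => (auxP_monic_deg t).1)]
      exact Matrix.det_vandermonde_ne_zero_iff.mpr hw

lemma sqrt2_combo {a b c : ℚ} (hb : b ≠ 0) (h : (a : ℝ) + Real.sqrt 2 * b = c) : False := by
  apply irrational_sqrt_two
  refine ⟨(c - a)/b, ?_⟩
  have hb' : (b : ℝ) ≠ 0 := by exact_mod_cast hb
  push_cast
  field_simp
  linarith

end AuxSo2b

/-- Part (so2b) of Lemma C2: the odd orthogonal character of rectangular shape
`(((m-n)/2)^n)` evaluated at `(-q^{n-1}, -q^{n-3}, …, -q^{-n+1})`, `q = e^{πi/m}`,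
vanishes when `m` is even and `n` is odd (`m ≥ n`). We work with square roots `y`
of the variables (`x_h = y_h²`), so the character is the unique function `f`,
continuous on nonzero arguments, with
`det(y_h^{m+n-2t+1} - y_h^{-(m+n-2t+1)}) = f(y) · det(y_h^{2n-2t+1} - y_h^{-(2n-2t+1)})`.
Its value at `y_h = e^{πi(m+n+1-2h)/(2m)}` (a square root of `-q^{n+1-2h}`) is `0`. -/
theorem stmt_14 (m n : ℕ) (hm : 0 < m) (hn : 0 < n) (hmn : n ≤ m)
    (hme : Even m) (hno : Odd n)
    (f : (Fin n → ℂ) → ℂ)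
    (hf_cont : ContinuousOn f {y : Fin n → ℂ | ∀ i, y i ≠ 0})
    (hf_eq : ∀ y : Fin n → ℂ, (∀ i, y i ≠ 0) →
      Matrix.det (Matrix.of fun h t : Fin n =>
          y h ^ (((m : ℤ) + n - 1 - 2 * (t : ℕ) : ℤ)) -
            y h ^ ((-((m : ℤ) + n - 1 - 2 * (t : ℕ)) : ℤ))) =
        f y * Matrix.det (Matrix.of fun h t : Fin n =>
          y h ^ ((2 * (n : ℤ) - 1 - 2 * (t : ℕ) : ℤ)) -
            y h ^ ((-(2 * (n : ℤ) - 1 - 2 * (t : ℕ)) : ℤ)))) :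
    f (fun h => Complex.exp
        (Real.pi * Complex.I * ((m : ℂ) + n - 1 - 2 * (h : ℕ)) / (2 * m))) = 0 := by
  obtain ⟨k, hk⟩ := hno
  have hmR : (m : ℝ) ≠ 0 := Nat.cast_ne_zero.mpr hm.ne'
  have hmQ : (m : ℚ) ≠ 0 := Nat.cast_ne_zero.mpr hm.ne'
  set h0 : Fin n := ⟨k, by omega⟩ with hh0
  set δ : Fin n → ℕ := fun h => if h = h0 then 0 else (h : ℕ) + 1 with hδ
  have hδinj : Function.Injective δ := by
    intro a b hab
    simp only [hδ] at hab
    by_cases ha : a = h0 <;> by_cases hb : b = h0 <;>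
      simp [ha, hb] at hab ⊢ <;> first | (exact ha.trans hb.symm) | exact Fin.ext (by omega)
  -- rational angle data
  set A : Fin n → ℚ := fun h => ((m : ℚ) + n - 1 - 2 * (h : ℕ)) / (2 * m) with hA
  set B : ℕ → Fin n → ℚ := fun j h => (δ h : ℚ) / (j + 1) with hB
  set β : ℕ → Fin n → ℝ := fun j h => π * ((A h : ℝ) + Real.sqrt 2 * (B j h : ℝ)) with hβ
  set yseq : ℕ → Fin n → ℂ := fun j h => Complex.exp ((β j h : ℂ) * Complex.I) with hy
  set α : Fin n → ℝ := fun h => π * (((m : ℝ) + n - 1 - 2 * (h : ℕ)) / (2 * m)) with hα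
  set ystar : Fin n → ℂ := fun h => Complex.exp ((α h : ℂ) * Complex.I) with hystar
  have hAh0 : A h0 = 1/2 := by
    simp only [hA, hh0]
    rw [div_eq_div_iff (by positivity) (by norm_num)]
    push_cast
    have : (n : ℚ) = 2 * k + 1 := by exact_mod_cast congrArg (Nat.cast : ℕ → ℚ) hk
    rw [this]; ring
  have hBh0 : ∀ j, B j h0 = 0 := by intro j; simp [hB, hδ]
  have hBne : ∀ j h, h ≠ h0 → B j h ≠ 0 := by
    intro j h hne
    simp only [hB, hδ, if_neg hne]
    positivity
  have hyne : ∀ j h, yseq j h ≠ 0 := fun j h => Complex.exp_ne_zero _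
  -- value at h0 is I
  have hβh0 : ∀ j, β j h0 = π / 2 := by
    intro j
    simp only [hβ, hBh0, hAh0]
    push_cast
    ring
  have hyI : ∀ j, yseq j h0 = Complex.I := by
    intro j
    simp only [hy, hβh0]
    rw [Complex.exp_mul_I, ← Complex.ofReal_cos, ← Complex.ofReal_sin,
      Real.cos_pi_div_two, Real.sin_pi_div_two]
    simp
  -- numerator vanishes
  have hnum : ∀ j, Matrix.det (Matrix.of fun h t : Fin n =>
      yseq j h ^ (((m : ℤ) + n - 1 - 2 * (t : ℕ) : ℤ)) -
        yseq j h ^ ((-((m : ℤ) + n - 1 - 2 * (t : ℕ)) : ℤ))) = 0 := by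
    intro j
    apply Matrix.det_eq_zero_of_row_eq_zero h0
    intro t
    have he : Even ((m : ℤ) + n - 1 - 2 * (t : ℕ)) := by
      obtain ⟨m', hm'⟩ := hme
      refine ⟨(m' : ℤ) + k - t, ?_⟩
      have : (m : ℤ) = m' + m' := by exact_mod_cast congrArg (Nat.cast : ℕ → ℤ) hm'
      have hn' : (n : ℤ) = 2 * k + 1 := by exact_mod_cast congrArg (Nat.cast : ℕ → ℤ) hk
      omega
    obtain ⟨d, hd⟩ := he
    set e : ℤ := (m : ℤ) + n - 1 - 2 * (t : ℕ) with hedef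
    have hx : Complex.I ^ e * Complex.I ^ e = 1 := by
      rw [← zpow_add₀ Complex.I_ne_zero]
      have : e + e = 4 * d := by omega
      rw [this, zpow_mul]
      rw [show (4:ℤ) = ((4:ℕ):ℤ) from rfl, zpow_natCast, Complex.I_pow_four, one_zpow]
    simp only [Matrix.of_apply, hyI j, zpow_neg]
    rw [inv_eq_of_mul_eq_one_right hx, sub_self]
  -- square of yseq
  have hy2 : ∀ j h, (yseq j h)^2 = Complex.exp ((2 * β j h : ℝ) * Complex.I) := by
    intro j h
    simp only [hy]
    rw [← Complex.exp_nat_mul]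
    congr 1
    push_cast
    ring
  -- no coordinate is ±1
  have hsub : ∀ j h, yseq j h - (yseq j h)⁻¹ ≠ 0 := by
    intro j h hzero
    have hsq : (yseq j h)^2 = 1 := by
      have h1 : yseq j h = (yseq j h)⁻¹ := by
        have := sub_eq_zero.mp hzero; exact this
      calc (yseq j h)^2 = yseq j h * yseq j h := sq (yseq j h) ▸ rfl
      _ = yseq j h * (yseq j h)⁻¹ := by rw [← h1]
      _ = 1 := mul_inv_cancel₀ (hyne j h)
    rw [hy2 j h] at hsq
    obtain ⟨ℓ, hℓ⟩ := Complex.exp_eq_one_iff.mp hsq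
    have hre : 2 * β j h = ℓ * (2 * π) := by
      have h2 : ((2 * β j h : ℝ) : ℂ) * Complex.I = ((ℓ * (2 * π) : ℝ) : ℂ) * Complex.I := by
        rw [hℓ]; push_cast; ring
      have := mul_right_cancel₀ Complex.I_ne_zero h2
      exact_mod_cast this
    simp only [hβ] at hre
    have hkey : (A h : ℝ) + Real.sqrt 2 * (B j h : ℝ) = (ℓ : ℝ) := by
      have hπ : (π : ℝ) ≠ 0 := Real.pi_ne_zero
      apply mul_left_cancel₀ hπ
      linear_combination hre / 2
    by_cases hc : h = h0
    · rw [hc, hAh0, hBh0] at hkey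
      have h12 : ((1:ℝ)/2) = (ℓ : ℝ) := by push_cast at hkey; linarith
      have : (2 * ℓ : ℤ) = 1 := by
        have : (2 * ℓ : ℝ) = 1 := by push_cast; linarith
        exact_mod_cast this
      omega
    · exact sqrt2_combo (hBne j h hc) (by push_cast; linarith [hkey] : ((A h : ℝ)) + Real.sqrt 2 * (B j h : ℝ) = ((ℓ : ℚ) : ℝ))
  -- injectivity of the w-values
  have hinj : ∀ j, Function.Injective (fun h => (yseq j h)^2 + ((yseq j h)^2)⁻¹) := by
    intro j p q heq
    by_contra hab
    simp only at heq
    rw [hy2 j p, hy2 j q, ← Complex.exp_neg, ← Complex.exp_neg] at heq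
    have hca : ∀ θ : ℝ, Complex.exp ((θ : ℂ) * Complex.I) + Complex.exp (-((θ : ℂ) * Complex.I))
        = 2 * (Real.cos θ : ℂ) := by
      intro θ
      rw [show -((θ:ℂ) * Complex.I) = ((-θ : ℝ) : ℂ) * Complex.I by push_cast; ring]
      rw [Complex.exp_mul_I, Complex.exp_mul_I]
      rw [← Complex.ofReal_cos, ← Complex.ofReal_sin, ← Complex.ofReal_cos, ← Complex.ofReal_sin]
      rw [Real.cos_neg, Real.sin_neg]
      push_cast
      ring
    rw [hca, hca] at heq
    have hcos : Real.cos (2 * β j p) = Real.cos (2 * β j q) := by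
      have := mul_left_cancel₀ (two_ne_zero' (α := ℂ)) heq
      exact_mod_cast this
    obtain ⟨ℓ, hℓ⟩ := Real.cos_eq_cos_iff.mp hcos
    have hπ : (π : ℝ) ≠ 0 := Real.pi_ne_zero
    have hBinj : B j p ≠ B j q := by
      intro hBe
      apply hab
      apply hδinj
      have hj1 : ((j : ℚ) + 1) ≠ 0 := by positivity
      simp only [hB] at hBe
      rw [div_eq_div_iff hj1 hj1] at hBe
      have : (δ p : ℚ) = δ q := mul_right_cancel₀ hj1 hBe
      exact_mod_cast this
    have hBzero : ∀ r, B j r = 0 → r = h0 := by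
      intro r hr
      by_contra hrh
      exact hBne j r hrh hr
    have hBnonneg : ∀ r, (0:ℚ) ≤ B j r := by
      intro r
      simp only [hB]
      positivity
    rcases hℓ with hℓ | hℓ
    · -- 2 β q = 2ℓπ + 2 β p
      simp only [hβ] at hℓ
      have hkey : (A q : ℝ) + Real.sqrt 2 * (B j q : ℝ)
          = ℓ + ((A p : ℝ) + Real.sqrt 2 * (B j p : ℝ)) := by
        apply mul_left_cancel₀ hπ
        linear_combination hℓ / 2
      refine sqrt2_combo (a := A q - A p) (b := B j q - B j p)
        (sub_ne_zero.mpr (Ne.symm hBinj)) (c := (ℓ : ℚ)) ?_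
      push_cast
      linarith
    · -- 2 β q = 2ℓπ - 2 β p
      simp only [hβ] at hℓ
      have hkey : (A q : ℝ) + Real.sqrt 2 * (B j q : ℝ)
          = ℓ - ((A p : ℝ) + Real.sqrt 2 * (B j p : ℝ)) := by
        apply mul_left_cancel₀ hπ
        linear_combination hℓ / 2
      have hbne : B j q + B j p ≠ 0 := by
        intro hz
        have h1 : B j q = 0 := le_antisymm (by linarith [hBnonneg p, hBnonneg q]) (hBnonneg q)
        have h2 : B j p = 0 := by linarith
        exact hab ((hBzero p h2).trans (hBzero q h1).symm)
      refine sqrt2_combo (a := A q + A p) (b := B j q + B j p) hbne (c := (ℓ : ℚ)) ?_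
      push_cast
      linarith
  -- denominator nonzero, hence f vanishes along the sequence
  have hden : ∀ j, Matrix.det (Matrix.of fun h t : Fin n =>
      yseq j h ^ ((2 * (n : ℤ) - 1 - 2 * (t : ℕ) : ℤ)) -
        yseq j h ^ ((-(2 * (n : ℤ) - 1 - 2 * (t : ℕ)) : ℤ))) ≠ 0 :=
    fun j => den_ne_zero n (yseq j) (hyne j) (hsub j) (hinj j)
  have hf0 : ∀ j, f (yseq j) = 0 := by
    intro j
    have h1 := hf_eq (yseq j) (hyne j)
    rw [hnum j] at h1
    exact (mul_eq_zero.mp h1.symm).resolve_right (hden j)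
  -- convergence of the sequence to the target point
  have hαA : ∀ h : Fin n, α h = π * (A h : ℝ) := by
    intro h
    simp only [hα, hA]
    push_cast
    ring
  have hBc : ∀ (j : ℕ) (h : Fin n), ((B j h : ℚ) : ℝ) = (δ h : ℝ) / ((j : ℝ) + 1) := by
    intro j h
    simp only [hB]
    push_cast
    ring
  have htendβ : ∀ h : Fin n, Filter.Tendsto (fun j => β j h) Filter.atTop (nhds (α h)) := by
    intro h
    have h1 : Filter.Tendsto (fun j : ℕ => (1 : ℝ) / (j + 1)) Filter.atTop (nhds 0) :=
      tendsto_one_div_add_atTop_nhds_zero_nat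
    have h2 : Filter.Tendsto (fun j : ℕ => α h + π * Real.sqrt 2 * (δ h : ℝ) * (1 / (j + 1)))
        Filter.atTop (nhds (α h + π * Real.sqrt 2 * (δ h : ℝ) * 0)) :=
      Filter.Tendsto.add tendsto_const_nhds (h1.const_mul _)
    rw [mul_zero, add_zero] at h2
    have heq : (fun j => β j h) = fun j : ℕ => α h + π * Real.sqrt 2 * (δ h : ℝ) * (1 / (j + 1)) := by
      funext j
      simp only [hβ, hBc, hαA]
      ring
    rw [heq]
    exact h2
  have hcont : Continuous fun r : ℝ => Complex.exp ((r : ℂ) * Complex.I) :=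
    Complex.continuous_exp.comp (Complex.continuous_ofReal.mul continuous_const)
  have htendy : Filter.Tendsto yseq Filter.atTop (nhds ystar) := by
    rw [tendsto_pi_nhds]
    intro h
    exact ((hcont.tendsto (α h)).comp (htendβ h))
  -- identify ystar with the point in the goal
  have hstareq : ystar = fun h : Fin n => Complex.exp
      (Real.pi * Complex.I * ((m : ℂ) + n - 1 - 2 * (h : ℕ)) / (2 * m)) := by
    funext h
    simp only [hystar, hα]
    congr 1
    push_cast
    have : (m : ℂ) ≠ 0 := by exact_mod_cast hmR
    field_simp
  -- conclude by continuity
  have hmem : ∀ j, yseq j ∈ {y : Fin n → ℂ | ∀ i, y i ≠ 0} := fun j i => hyne j i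
  have hstarmem : ystar ∈ {y : Fin n → ℂ | ∀ i, y i ≠ 0} := fun i => Complex.exp_ne_zero _
  have hcw : ContinuousWithinAt f {y : Fin n → ℂ | ∀ i, y i ≠ 0} ystar := hf_cont ystar hstarmem
  have ht1 : Filter.Tendsto (fun j => f (yseq j)) Filter.atTop (nhds (f ystar)) :=
    hcw.tendsto.comp (tendsto_nhdsWithin_iff.mpr ⟨htendy, Filter.Eventually.of_forall hmem⟩)
  have ht2 : Filter.Tendsto (fun j => f (yseq j)) Filter.atTop (nhds 0) := by
    simp only [hf0]
    exact tendsto_const_nhds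
  have hfinal : f ystar = 0 := tendsto_nhds_unique ht1 ht2
  rw [hstareq] at hfinal
  exact hfinal
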